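/- Every 2 ⊗ N state that is invariant under partial transpose of the first factor is separable: if ρ is a positive semidefinite complex matrix indexed by (Fin 2 × Fin N) × (Fin 2 × Fin N) with trace 1 satisfying ρ((i,k),(j,l)) = ρ((j,k),(i,l)) for all i,j ∈ Fin 2 and k,l ∈ Fin N, then there is a finite family of nonzero vectors x_t ∈ ℂ², y_t ∈ ℂ^N with ρ((i,k),(j,l)) = ∑_t x_t(i)y_t(k)·conj(x_t(j)y_t(l)) for all i,k,j,l. -/

import Mathlib

open scoped ComplexOrder

open Matrix in
private lemma conj_diag_mul {N : ℕ} (U : Matrix (Fin N) (Fin N) ℂ) (hUU : Uᴴ * U = 1)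
    (d e : Fin N → ℂ) :
    (U * diagonal d * Uᴴ) * (U * diagonal e * Uᴴ) = U * diagonal (fun k => d k * e k) * Uᴴ := by
  calc U * diagonal d * Uᴴ * (U * diagonal e * Uᴴ)
      = U * diagonal d * (Uᴴ * U) * diagonal e * Uᴴ := by
        simp only [Matrix.mul_assoc]
    _ = U * (diagonal d * diagonal e) * Uᴴ := by
        rw [hUU]; simp only [Matrix.mul_one, Matrix.mul_assoc]
    _ = U * diagonal (fun k => d k * e k) * Uᴴ := by rw [diagonal_mul_diagonal]

open Matrix in
private lemma sandwich {N : ℕ} (X Y : Matrix (Fin N) (Fin N) ℂ) (a b : Fin N → ℂ) :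
    star (X *ᵥ a) ⬝ᵥ (Y *ᵥ b) = star a ⬝ᵥ ((Xᴴ * Y) *ᵥ b) := by
  rw [star_mulVec, ← dotProduct_mulVec, Matrix.mulVec_mulVec]

open Matrix in
private lemma sandwich1 {N : ℕ} (X : Matrix (Fin N) (Fin N) ℂ) (a b : Fin N → ℂ) :
    star (X *ᵥ a) ⬝ᵥ b = star a ⬝ᵥ (Xᴴ *ᵥ b) := by
  rw [star_mulVec, ← dotProduct_mulVec]

open Matrix MatrixOrder in
private lemma psd_sqrt_exists {N : ℕ} (R : Matrix (Fin N) (Fin N) ℂ) (h : R.PosSemidef) :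
    ∃ S : Matrix (Fin N) (Fin N) ℂ, S * S = R ∧ Sᴴ = S := by
  classical
  obtain ⟨X, hX, -, hR⟩ := CFC.exists_sqrt_of_isSelfAdjoint_of_quasispectrumRestricts
    h.isHermitian.isSelfAdjoint (QuasispectrumRestricts.nnreal_of_nonneg h.nonneg)
  exact ⟨X, hR, hX⟩

open Matrix in
/-- Auxiliary: decomposition of a PSD "block-Hermitian" triple. -/
private lemma blocks_decomp {N : ℕ} (A B C : Matrix (Fin N) (Fin N) ℂ)
    (hA : A.PosSemidef) (hB : B.IsHermitian) (hC : C.IsHermitian)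
    (hq : ∀ f g : Fin N → ℂ, 0 ≤ star f ⬝ᵥ (A *ᵥ f) + star f ⬝ᵥ (B *ᵥ g)
        + star g ⬝ᵥ (B *ᵥ f) + star g ⬝ᵥ (C *ᵥ g)) :
    ∃ (v w : Fin N → Fin N → ℂ) (t : Fin N → ℝ),
      (∀ k l, A k l = ∑ j, v j k * star (v j l)) ∧
      (∀ k l, B k l = ∑ j, (t j : ℂ) * (v j k * star (v j l))) ∧
      (∀ k l, C k l = (∑ j, (t j : ℂ)^2 * (v j k * star (v j l)))
          + ∑ j, w j k * star (w j l)) := by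
  classical
  set U : Matrix (Fin N) (Fin N) ℂ := (hA.1.eigenvectorUnitary : Matrix (Fin N) (Fin N) ℂ) with hU
  set μ : Fin N → ℝ := hA.1.eigenvalues with hμdef
  have hμ : ∀ k, 0 ≤ μ k := hA.eigenvalues_nonneg
  have hUU : Uᴴ * U = 1 := by
    simpa [star_eq_conjTranspose] using Unitary.coe_star_mul_self hA.1.eigenvectorUnitary
  have hUU' : U * Uᴴ = 1 := by
    simpa [star_eq_conjTranspose] using Unitary.coe_mul_star_self hA.1.eigenvectorUnitary
  set D : (Fin N → ℂ) → Matrix (Fin N) (Fin N) ℂ := fun d => U * diagonal d * Uᴴ with hD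
  have hDmul : ∀ d e, D d * D e = D (fun k => d k * e k) := fun d e => conj_diag_mul U hUU d e
  have hDcongr : ∀ d e : Fin N → ℂ, (∀ k, d k = e k) → D d = D e :=
    fun d e h => congrArg D (funext h)
  have hDH : ∀ d : Fin N → ℂ, (∀ k, star (d k) = d k) → (D d)ᴴ = D d := by
    intro d hd
    simp only [hD, conjTranspose_mul, conjTranspose_conjTranspose, diagonal_conjTranspose]
    rw [show star d = d from funext hd, Matrix.mul_assoc]
  have hAD : A = D (fun k => (μ k : ℂ)) := hA.1.spectral_theorem
  set sq : Fin N → ℂ := fun k => (Real.sqrt (μ k) : ℂ) with hsq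
  set psq : Fin N → ℂ := fun k => if μ k = 0 then 0 else ((Real.sqrt (μ k))⁻¹ : ℂ) with hpsq
  set ap : Fin N → ℂ := fun k => if μ k = 0 then 0 else ((μ k)⁻¹ : ℂ) with hap
  set pr : Fin N → ℂ := fun k => if μ k = 0 then 0 else 1 with hpr
  have hμc : ∀ k, μ k ≠ 0 → (μ k : ℂ) ≠ 0 := fun k h => by
    simpa [Complex.ofReal_ne_zero] using h
  have hSqSq : D sq * D sq = A := by
    rw [hDmul, hAD]
    refine hDcongr _ _ fun k => ?_
    simp only [hsq, ← Complex.ofReal_mul, Real.mul_self_sqrt (hμ k)]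
  have hSqPsq : D sq * D psq = D pr := by
    rw [hDmul]
    refine hDcongr _ _ fun k => ?_
    by_cases h : μ k = 0
    · simp [hsq, hpsq, hpr, h]
    · have hs : Real.sqrt (μ k) ≠ 0 := by
        rw [Real.sqrt_ne_zero']
        exact lt_of_le_of_ne (hμ k) (Ne.symm h)
      simp only [hsq, hpsq, hpr, if_neg h, ← Complex.ofReal_inv, ← Complex.ofReal_mul,
        mul_inv_cancel₀ hs, Complex.ofReal_one]
  have hPsqSq : D psq * D sq = D pr := by
    rw [hDmul, ← hSqPsq, hDmul]
    exact hDcongr _ _ fun k => mul_comm _ _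
  have hPsqPsq : D psq * D psq = D ap := by
    rw [hDmul]
    refine hDcongr _ _ fun k => ?_
    by_cases h : μ k = 0
    · simp [hpsq, hap, h]
    · simp only [hpsq, hap, if_neg h, ← Complex.ofReal_inv, ← Complex.ofReal_mul,
        ← mul_inv, Real.mul_self_sqrt (hμ k)]
  have hApAAp : D ap * A * D ap = D ap := by
    rw [hAD, hDmul, hDmul]
    refine hDcongr _ _ fun k => ?_
    by_cases h : μ k = 0
    · simp [hap, h]
    · have h2 := hμc k h
      simp only [hap, if_neg h]
      field_simp
  have hsqH : (D sq)ᴴ = D sq := hDH _ fun k => by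
    simp [hsq, Complex.star_def, Complex.conj_ofReal]
  have hpsqH : (D psq)ᴴ = D psq := hDH _ fun k => by
    by_cases h : μ k = 0 <;> simp [hpsq, h, Complex.star_def, Complex.conj_ofReal]
  have hapH : (D ap)ᴴ = D ap := hDH _ fun k => by
    by_cases h : μ k = 0 <;> simp [hap, h, Complex.star_def, Complex.conj_ofReal]
  have hprH : (D pr)ᴴ = D pr := hDH _ fun k => by
    by_cases h : μ k = 0 <;> simp [hpr, h]
  -- kernel of A is contained in kernel of B
  have hker : ∀ f : Fin N → ℂ, A *ᵥ f = 0 → B *ᵥ f = 0 := by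
    intro f hf
    have key : ∀ g : Fin N → ℂ, star f ⬝ᵥ (B *ᵥ g) = 0 := by
      intro g
      by_contra hs
      set s : ℂ := star f ⬝ᵥ (B *ᵥ g) with hsdef
      set q : ℂ := star g ⬝ᵥ (C *ᵥ g) with hqdef
      have hns : 0 < Complex.normSq s := Complex.normSq_pos.mpr hs
      set r : ℝ := (q.re + 1) / (2 * Complex.normSq s) with hr
      set c : ℂ := -(r : ℂ) * s with hc
      have h1 : star s = star (B *ᵥ g) ⬝ᵥ f := by
        rw [hsdef]
        exact (congrArg star (star_dotProduct f (B *ᵥ g))).trans (star_star _)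
      have hsym : star g ⬝ᵥ (B *ᵥ f) = star s := by
        rw [h1, sandwich1 B g f, hB.eq]
      have h0 := hq (c • f) g
      simp only [Matrix.mulVec_smul, hf, smul_zero, dotProduct_zero, star_smul,
        smul_dotProduct, dotProduct_smul, smul_eq_mul, zero_add, hsym] at h0
      have hss : s * star s = (Complex.normSq s : ℂ) := by
        rw [show star s = (starRingEnd ℂ) s from rfl, Complex.mul_conj]
      have hch : star c * s + c * star s + q = q - ((2 * r * Complex.normSq s : ℝ) : ℂ) := by
        have hstc : star c = -(r:ℂ) * star s := by
          rw [hc, star_mul', star_neg]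
          rw [show star ((r:ℝ):ℂ) = ((r:ℝ):ℂ) by
            simp [Complex.star_def, Complex.conj_ofReal]]
          try ring
        rw [hstc, hc]
        have h2 : star s * s = (Complex.normSq s : ℂ) := by rw [mul_comm]; exact hss
        calc -(r:ℂ) * star s * s + -(r:ℂ) * s * star s + q
            = -(r:ℂ) * (star s * s) + -(r:ℂ) * (s * star s) + q := by ring
          _ = q - ((2 * r * Complex.normSq s : ℝ) : ℂ) := by
              rw [h2, hss]; push_cast; ring
      rw [hch] at h0
      have h1 : (0:ℝ) ≤ q.re - 2 * r * Complex.normSq s := by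
        have h2 := (Complex.le_def.mp h0).1
        simpa using h2
      have h3 : 2 * r * Complex.normSq s = q.re + 1 := by
        rw [hr]; field_simp
      rw [h3] at h1
      linarith
    have h3 := key (B *ᵥ f)
    have h4 : star (B *ᵥ f) ⬝ᵥ (B *ᵥ f) = 0 := by
      rw [sandwich1 B, hB.eq]; exact h3
    exact dotProduct_star_self_eq_zero.mp h4
  -- projections onto the range of A fix B
  set n0 : Fin N → ℂ := fun k => if μ k = 0 then 1 else 0 with hn0
  have hAU : A * U = U * diagonal (fun k => (μ k : ℂ)) := by
    rw [hAD]
    show U * diagonal _ * Uᴴ * U = _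
    rw [Matrix.mul_assoc, hUU, Matrix.mul_one]
  have hcol : ∀ k, μ k = 0 → B *ᵥ (fun m => U m k) = 0 := by
    intro k hk
    apply hker
    funext m
    calc (A *ᵥ fun m => U m k) m = ∑ l, A m l * U l k := rfl
      _ = (A * U) m k := (Matrix.mul_apply).symm
      _ = (U * diagonal (fun k => (μ k : ℂ))) m k := by rw [hAU]
      _ = U m k * (μ k : ℂ) := Matrix.mul_diagonal _ _ _ _
      _ = 0 := by rw [hk]; simp
  have hBn0 : B * D n0 = 0 := by
    have h1 : B * (U * diagonal n0) = 0 := by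
      rw [← Matrix.mul_assoc]
      ext k' k
      rw [Matrix.mul_diagonal]
      by_cases h : μ k = 0
      · have h2 := congrFun (hcol k h) k'
        have h3 : (B * U) k' k = 0 := by
          simpa [Matrix.mulVec, dotProduct, Matrix.mul_apply] using h2
        simp [h3]
      · simp [hn0, h]
    calc B * D n0 = B * (U * diagonal n0) * Uᴴ := by
          simp only [hD, Matrix.mul_assoc]
      _ = 0 := by rw [h1, Matrix.zero_mul]
  have hprn0 : D pr + D n0 = 1 := by
    have h1 : D pr + D n0 = U * (diagonal pr + diagonal n0) * Uᴴ := by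
      simp only [hD, Matrix.mul_add, Matrix.add_mul]
    rw [h1, diagonal_add]
    have h2 : (fun k => pr k + n0 k) = fun _ => (1:ℂ) := by
      funext k; by_cases h : μ k = 0 <;> simp [hpr, hn0, h]
    rw [h2]
    have h3 : (diagonal fun _ => (1:ℂ)) = (1 : Matrix (Fin N) (Fin N) ℂ) := by
      simp [Matrix.diagonal_one]
    rw [h3, Matrix.mul_one, hUU']
  have hBP : B * D pr = B := by
    calc B * D pr = B * D pr + B * D n0 := by rw [hBn0, add_zero]
      _ = B * (D pr + D n0) := (Matrix.mul_add _ _ _).symm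
      _ = B := by rw [hprn0, Matrix.mul_one]
  have hPB : D pr * B = B := by
    have h := congrArg Matrix.conjTranspose hBP
    rwa [conjTranspose_mul, hprH, hB.eq] at h
  -- the pencil H
  set H : Matrix (Fin N) (Fin N) ℂ := D psq * B * D psq with hHdef
  have hHherm : H.IsHermitian := by
    show Hᴴ = H
    rw [hHdef, conjTranspose_mul (D psq * B) (D psq), conjTranspose_mul (D psq) B,
      hpsqH, hB.eq, Matrix.mul_assoc (D psq) B (D psq)]
  set W : Matrix (Fin N) (Fin N) ℂ := (hHherm.eigenvectorUnitary : Matrix (Fin N) (Fin N) ℂ)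
    with hWdef
  set t : Fin N → ℝ := hHherm.eigenvalues with htdef
  have hWW : Wᴴ * W = 1 := by
    simpa [star_eq_conjTranspose] using Unitary.coe_star_mul_self hHherm.eigenvectorUnitary
  have hWW' : W * Wᴴ = 1 := by
    simpa [star_eq_conjTranspose] using Unitary.coe_mul_star_self hHherm.eigenvectorUnitary
  have hHspec : H = W * diagonal (fun j => (t j : ℂ)) * Wᴴ := hHherm.spectral_theorem
  have hSHS : D sq * H * D sq = B := by
    calc D sq * H * D sq = D sq * D psq * B * (D psq * D sq) := by
          rw [hHdef]; simp only [Matrix.mul_assoc]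
      _ = B := by rw [hSqPsq, hPsqSq, Matrix.mul_assoc, ← Matrix.mul_assoc, hPB, hBP]
  have hSHHS : D sq * (H * H) * D sq = B * D ap * B := by
    have h1 : H * H = D psq * B * D ap * B * D psq := by
      rw [hHdef]
      calc D psq * B * D psq * (D psq * B * D psq)
          = D psq * B * (D psq * D psq) * B * D psq := by simp only [Matrix.mul_assoc]
        _ = D psq * B * D ap * B * D psq := by rw [hPsqPsq]
    calc D sq * (H * H) * D sq
        = (D sq * D psq) * (B * D ap * B) * (D psq * D sq) := by
          rw [h1]; simp only [Matrix.mul_assoc]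
      _ = D pr * (B * (D ap * B)) * D pr := by
          rw [hSqPsq, hPsqSq]; simp only [Matrix.mul_assoc]
      _ = B * D ap * B := by
          rw [← Matrix.mul_assoc (D pr) B (D ap * B), hPB, ← Matrix.mul_assoc B (D ap) B,
            Matrix.mul_assoc (B * D ap) B (D pr), hBP]
  set V : Matrix (Fin N) (Fin N) ℂ := D sq * W with hVdef
  have hVA : V * Vᴴ = A := by
    rw [hVdef, conjTranspose_mul (D sq) W, hsqH]
    calc D sq * W * (Wᴴ * D sq) = D sq * (W * Wᴴ) * D sq := by simp only [Matrix.mul_assoc]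
      _ = A := by rw [hWW', Matrix.mul_one, hSqSq]
  have hVB : V * diagonal (fun j => (t j : ℂ)) * Vᴴ = B := by
    rw [hVdef, conjTranspose_mul (D sq) W, hsqH]
    calc D sq * W * diagonal (fun j => (t j : ℂ)) * (Wᴴ * D sq)
        = D sq * (W * diagonal (fun j => (t j : ℂ)) * Wᴴ) * D sq := by
          simp only [Matrix.mul_assoc]
      _ = B := by rw [← hHspec, hSHS]
  have hW2 : W * diagonal (fun j => ((t j : ℂ))^2) * Wᴴ = H * H := by
    rw [hHspec, conj_diag_mul W hWW]
    refine congrArg (fun d => W * diagonal d * Wᴴ) (funext fun k => ?_)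
    ring
  have hVC : V * diagonal (fun j => ((t j : ℂ))^2) * Vᴴ = B * D ap * B := by
    rw [hVdef, conjTranspose_mul (D sq) W, hsqH]
    calc D sq * W * diagonal (fun j => ((t j : ℂ))^2) * (Wᴴ * D sq)
        = D sq * (W * diagonal (fun j => ((t j : ℂ))^2) * Wᴴ) * D sq := by
          simp only [Matrix.mul_assoc]
      _ = B * D ap * B := by rw [hW2, hSHHS]
  -- the Schur complement
  set R : Matrix (Fin N) (Fin N) ℂ := C - B * D ap * B with hRdef
  have hRherm : R.IsHermitian := by
    show Rᴴ = R
    rw [hRdef, Matrix.conjTranspose_sub, hC.eq, conjTranspose_mul (B * D ap) B,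
      conjTranspose_mul B (D ap), hapH, hB.eq, Matrix.mul_assoc B (D ap) B]
  have hRpsd : R.PosSemidef := by
    refine Matrix.PosSemidef.of_dotProduct_mulVec_nonneg hRherm fun g => ?_
    have h0 := hq (-(D ap *ᵥ (B *ᵥ g))) g
    set qq : ℂ := star g ⬝ᵥ ((B * D ap * B) *ᵥ g) with hqq
    have e1 : star (D ap *ᵥ (B *ᵥ g)) ⬝ᵥ (A *ᵥ (D ap *ᵥ (B *ᵥ g))) = qq := by
      rw [sandwich (D ap) A (B *ᵥ g) (D ap *ᵥ (B *ᵥ g)), hapH,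
        Matrix.mulVec_mulVec (B *ᵥ g) (D ap * A) (D ap), hApAAp,
        sandwich B (D ap) g (B *ᵥ g), hB.eq, Matrix.mulVec_mulVec g (B * D ap) B]
    have e2 : star (D ap *ᵥ (B *ᵥ g)) ⬝ᵥ (B *ᵥ g) = qq := by
      rw [sandwich (D ap) B (B *ᵥ g) g, hapH, sandwich B (D ap * B) g g, hB.eq,
        ← Matrix.mul_assoc B (D ap) B]
    have e3 : star g ⬝ᵥ (B *ᵥ (D ap *ᵥ (B *ᵥ g))) = qq := by
      rw [Matrix.mulVec_mulVec g (D ap) B, Matrix.mulVec_mulVec g B (D ap * B),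
        ← Matrix.mul_assoc B (D ap) B]
    simp only [Matrix.mulVec_neg, star_neg, neg_dotProduct, dotProduct_neg, neg_neg] at h0
    rw [e1, e2, e3] at h0
    have h4 : star g ⬝ᵥ (R *ᵥ g) = qq + -qq + -qq + star g ⬝ᵥ (C *ᵥ g) := by
      rw [hRdef, Matrix.sub_mulVec, dotProduct_sub]
      ring
    rw [h4]
    exact h0
  obtain ⟨S, hSS, hSherm⟩ := psd_sqrt_exists R hRpsd
  refine ⟨fun j k => V k j, fun j k => S k j, t, ?_, ?_, ?_⟩
  · intro k l
    rw [← hVA, Matrix.mul_apply]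
    exact Finset.sum_congr rfl fun j _ => by rw [conjTranspose_apply]
  · intro k l
    rw [← hVB, Matrix.mul_apply]
    refine Finset.sum_congr rfl fun j _ => ?_
    rw [Matrix.mul_diagonal, conjTranspose_apply]
    ring
  · intro k l
    have hCdec : C = B * D ap * B + R := by rw [hRdef]; abel
    rw [hCdec, Matrix.add_apply]
    congr 1
    · rw [← hVC, Matrix.mul_apply]
      refine Finset.sum_congr rfl fun j _ => ?_
      rw [Matrix.mul_diagonal, conjTranspose_apply]
      ring
    · rw [show R k l = (S * S) k l from
        (congrFun (congrFun hSS k) l).symm, Matrix.mul_apply]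
      refine Finset.sum_congr rfl fun j _ => ?_
      have h5 : S j l = star (S l j) := by
        conv_lhs => rw [← hSherm]
        simp [Matrix.conjTranspose_apply]
      rw [h5]

open Matrix in
theorem stmt_3 {N : ℕ} (ρ : Matrix (Fin 2 × Fin N) (Fin 2 × Fin N) ℂ)
    (hpsd : ρ.PosSemidef) (htr : ρ.trace = 1)
    (hPT : ∀ (i j : Fin 2) (k l : Fin N), ρ (i, k) (j, l) = ρ (j, k) (i, l)) :
    ∃ (m : ℕ) (x : Fin m → Fin 2 → ℂ) (y : Fin m → Fin N → ℂ),
      (∀ t, x t ≠ 0) ∧ (∀ t, y t ≠ 0) ∧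
      ∀ (i j : Fin 2) (k l : Fin N),
        ρ (i, k) (j, l) = ∑ t, (x t i * y t k) * star (x t j * y t l) := by
  classical
  set A : Matrix (Fin N) (Fin N) ℂ := Matrix.of (fun k l => ρ (0, k) (0, l)) with hAdef
  set B : Matrix (Fin N) (Fin N) ℂ := Matrix.of (fun k l => ρ (0, k) (1, l)) with hBdef
  set C : Matrix (Fin N) (Fin N) ℂ := Matrix.of (fun k l => ρ (1, k) (1, l)) with hCdef
  have hρst : ∀ p q, star (ρ q p) = ρ p q := fun p q => by
    calc star (ρ q p) = ρᴴ p q := (Matrix.conjTranspose_apply ρ q p).symm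
      _ = ρ p q := by rw [hpsd.1]
  -- the embedding of a pair of vectors
  set z : (Fin N → ℂ) → (Fin N → ℂ) → (Fin 2 × Fin N → ℂ) :=
    fun f g p => if p.1 = 0 then f p.2 else g p.2 with hzdef
  have hz : ∀ f g, star (z f g) ⬝ᵥ (ρ *ᵥ z f g) =
      star f ⬝ᵥ (A *ᵥ f) + star f ⬝ᵥ (B *ᵥ g) + star g ⬝ᵥ (B *ᵥ f) + star g ⬝ᵥ (C *ᵥ g) := by
    intro f g
    have h10 : ∀ l : Fin N, ρ (1, l) (0, l) = ρ (1, l) (0, l) := fun _ => rfl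
    simp only [dotProduct, Matrix.mulVec, Fintype.sum_prod_type, Fin.sum_univ_two,
      hzdef, Pi.star_apply, hAdef, hBdef, hCdef, Matrix.of_apply]
    norm_num
    simp only [mul_add, Finset.sum_add_distrib]
    simp only [show ∀ x x1, ρ (1,x) (0,x1) = ρ (0,x) (1,x1) from fun x x1 => hPT 1 0 x x1]
    ring
  have hAh : A.IsHermitian := by
    ext k l
    simp only [Matrix.conjTranspose_apply, hAdef, Matrix.of_apply, hρst]
  have hCh : C.IsHermitian := by
    ext k l
    simp only [Matrix.conjTranspose_apply, hCdef, Matrix.of_apply, hρst]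
  have hBh : B.IsHermitian := by
    ext k l
    simp only [Matrix.conjTranspose_apply, hBdef, Matrix.of_apply]
    rw [hρst (1, k) (0, l), hPT 1 0 k l]
  have hApsd : A.PosSemidef := by
    refine Matrix.PosSemidef.of_dotProduct_mulVec_nonneg hAh fun f => ?_
    have h0 := hpsd.dotProduct_mulVec_nonneg (z f 0)
    rw [hz f 0] at h0
    simpa using h0
  have hq : ∀ f g : Fin N → ℂ, 0 ≤ star f ⬝ᵥ (A *ᵥ f) + star f ⬝ᵥ (B *ᵥ g)
      + star g ⬝ᵥ (B *ᵥ f) + star g ⬝ᵥ (C *ᵥ g) := by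
    intro f g
    rw [← hz f g]
    exact hpsd.dotProduct_mulVec_nonneg (z f g)
  obtain ⟨v, w, t, hAe, hBe, hCe⟩ := blocks_decomp A B C hApsd hBh hCh hq
  -- the unfiltered family
  set xs : (Fin N ⊕ Fin N) → Fin 2 → ℂ :=
    Sum.elim (fun j => ![1, (t j : ℂ)]) (fun _ => ![0, 1]) with hxs
  set ys : (Fin N ⊕ Fin N) → Fin N → ℂ := Sum.elim v w with hys
  have hstart : ∀ j : Fin N, star ((t j : ℂ)) = (t j : ℂ) := fun j => by
    simp [Complex.star_def, Complex.conj_ofReal]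
  have master : ∀ (i j : Fin 2) (k l : Fin N),
      ρ (i, k) (j, l) = ∑ p : Fin N ⊕ Fin N, (xs p i * ys p k) * star (xs p j * ys p l) := by
    have h2 : ∀ i : Fin 2, i = 0 ∨ i = 1 := by decide
    intro i j
    rcases h2 i with rfl | rfl <;> rcases h2 j with rfl | rfl <;> intro k l
    · rw [show ρ (0, k) (0, l) = A k l from rfl, hAe k l, Fintype.sum_sum_type]
      simp only [hxs, hys, Sum.elim_inl, Sum.elim_inr, Matrix.cons_val_zero,
        Matrix.cons_val_one, Matrix.head_cons, one_mul, zero_mul, mul_zero, star_zero,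
        star_mul', star_one, mul_one, hstart, Finset.sum_const_zero, add_zero, zero_add]
      all_goals first
        | rfl
        | (exact Finset.sum_congr rfl fun p _ => by ring)
        | (congr 1 <;> exact Finset.sum_congr rfl fun p _ => by ring)
    · rw [show ρ (0, k) (1, l) = B k l from rfl, hBe k l, Fintype.sum_sum_type]
      simp only [hxs, hys, Sum.elim_inl, Sum.elim_inr, Matrix.cons_val_zero,
        Matrix.cons_val_one, Matrix.head_cons, one_mul, zero_mul, mul_zero, star_zero,
        star_mul', star_one, mul_one, hstart, Finset.sum_const_zero, add_zero, zero_add]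
      all_goals first
        | rfl
        | (exact Finset.sum_congr rfl fun p _ => by ring)
        | (congr 1 <;> exact Finset.sum_congr rfl fun p _ => by ring)
    · rw [hPT 1 0 k l, show ρ (0, k) (1, l) = B k l from rfl, hBe k l, Fintype.sum_sum_type]
      simp only [hxs, hys, Sum.elim_inl, Sum.elim_inr, Matrix.cons_val_zero,
        Matrix.cons_val_one, Matrix.head_cons, one_mul, zero_mul, mul_zero, star_zero,
        star_mul', star_one, mul_one, hstart, Finset.sum_const_zero, add_zero, zero_add]
      all_goals first
        | rfl
        | (exact Finset.sum_congr rfl fun p _ => by ring)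
        | (congr 1 <;> exact Finset.sum_congr rfl fun p _ => by ring)
    · rw [show ρ (1, k) (1, l) = C k l from rfl, hCe k l, Fintype.sum_sum_type]
      simp only [hxs, hys, Sum.elim_inl, Sum.elim_inr, Matrix.cons_val_zero,
        Matrix.cons_val_one, Matrix.head_cons, one_mul, zero_mul, mul_zero, star_zero,
        star_mul', star_one, mul_one, hstart, Finset.sum_const_zero, add_zero, zero_add]
      all_goals first
        | rfl
        | (exact Finset.sum_congr rfl fun p _ => by ring)
        | (congr 1 <;> exact Finset.sum_congr rfl fun p _ => by ring)
  -- filter out the zero vectors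
  set sgood : Finset (Fin N ⊕ Fin N) := Finset.univ.filter (fun p => ys p ≠ 0) with hsgood
  have hxsne : ∀ p : Fin N ⊕ Fin N, xs p ≠ 0 := by
    rintro (j | j) h
    · have h0 := congrFun h 0
      simp [hxs] at h0
    · have h0 := congrFun h 1
      simp [hxs] at h0
  refine ⟨sgood.card, fun i => xs ((sgood.equivFin.symm i) : Fin N ⊕ Fin N),
    fun i => ys ((sgood.equivFin.symm i) : Fin N ⊕ Fin N), ?_, ?_, ?_⟩
  · intro i
    exact hxsne _
  · intro i
    exact (Finset.mem_filter.mp (sgood.equivFin.symm i).2).2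
  · intro i j k l
    rw [master i j k l]
    rw [show (∑ p : Fin N ⊕ Fin N, (xs p i * ys p k) * star (xs p j * ys p l))
        = ∑ p ∈ sgood, (xs p i * ys p k) * star (xs p j * ys p l) from
      (Finset.sum_subset sgood.subset_univ (fun p _ hp => by
        have h0 : ys p = 0 := by
          by_contra hne
          exact hp (by rw [hsgood, Finset.mem_filter]; exact ⟨Finset.mem_univ _, hne⟩)
        simp [h0])).symm]
    rw [← Finset.sum_attach sgood (fun p => (xs p i * ys p k) * star (xs p j * ys p l))]
    exact (Fintype.sum_equiv sgood.equivFin.symm _ _ (fun p => rfl)).symm
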